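/- Let P_s be a sign pattern on n nodes and let Z ⊆ V be a negative signed zero forcing set of P_s. Then for every A ∈ Q_s(P_s) and every real λ < 0, the dimension of the left eigenspace {ν ∈ ℝ^n : ν^T A = λ ν^T} is at most |Z|. In particular, the maximum geometric multiplicity of a negative eigenvalue over all A ∈ Q_s(P_s) is at most the negative signed zero forcing number of P_s (the minimum cardinality of a negative signed zero forcing set). -/

import Mathlib

/-- An entry of a sign pattern: `+`, `-`, `0`, or `?` (unrestricted). -/
inductive SignPatEntry : Type
  | pos | neg | zero | unk
deriving DecidableEq

namespace SignPatEntry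

/-- Sign inversion: `inv(+) = -`, `inv(-) = +`. -/
def inv : SignPatEntry → SignPatEntry
  | pos => neg
  | neg => pos
  | zero => zero
  | unk => unk

/-- Product of signs (used as `s · P(u,v)`). -/
def mul : SignPatEntry → SignPatEntry → SignPatEntry
  | pos, y => y
  | neg, y => y.inv
  | zero, _ => zero
  | unk, _ => unk

end SignPatEntry

/-- A real number matches a sign-pattern entry. -/
def matchesSign : SignPatEntry → ℝ → Prop
  | .pos, a => 0 < a
  | .neg, a => a < 0
  | .zero, a => a = 0
  | .unk, _ => True

/-- The qualitative class of a sign pattern: real matrices whose entries have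
the prescribed signs. -/
def QClass {n : ℕ} (P : Fin n → Fin n → SignPatEntry)
    (A : Matrix (Fin n) (Fin n) ℝ) : Prop :=
  ∀ i j : Fin n, matchesSign (P i j) (A i j)

/-- A configuration of the signing-and-coloring game: a set of black nodes and a
partial marking of nodes with signs. -/
structure Config (n : ℕ) where
  black : Finset (Fin n)
  mark : Fin n → Option SignPatEntry

/-- The set of white out-neighbors of `v` (out-neighbors of `v` are the `u` with
`P u v ≠ 0`). -/
def Wset {n : ℕ} (P : Fin n → Fin n → SignPatEntry) (c : Config n) (v : Fin n) :
    Finset (Fin n) :=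
  Finset.univ.filter (fun u => u ∉ c.black ∧ P u v ≠ SignPatEntry.zero)

/-- One step of the signing and coloring rule, played on the pattern `P`. -/
inductive Step {n : ℕ} (P : Fin n → Fin n → SignPatEntry) : Config n → Config n → Prop
  /-- (1) a pivot node `v` with a single white out-neighbor `u` forces `u` black. -/
  | force1 (c : Config n) (v u : Fin n)
      (hv : v ∈ c.black ∨ P v v ≠ SignPatEntry.unk)
      (hW : Wset P c v = {u}) :
      Step P c ⟨insert u c.black, c.mark⟩
  /-- (2) if all white out-neighbors of a pivot `v` are marked consistently
  (all with `m(u) = P(u,v)` or all with `m(u) = -P(u,v)`), they all become black. -/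
  | force2 (c : Config n) (v : Fin n)
      (hv : v ∈ c.black ∨ P v v ≠ SignPatEntry.unk)
      (hall : (∀ u ∈ Wset P c v, c.mark u = some (P u v)) ∨
              (∀ u ∈ Wset P c v, c.mark u = some (P u v).inv)) :
      Step P c ⟨c.black ∪ Wset P c v, c.mark⟩
  /-- (3) if exactly one white out-neighbor `w` of a pivot `v` is unmarked, at least one
  is marked, and every marked one satisfies `m(u) = s · P(u,v)`, then `w` gets
  marked with `-s · P(w,v)`. -/
  | force3 (c : Config n) (v w : Fin n) (s : SignPatEntry)
      (hv : v ∈ c.black ∨ P v v ≠ SignPatEntry.unk)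
      (hs : s = SignPatEntry.pos ∨ s = SignPatEntry.neg)
      (hw : w ∈ Wset P c v) (hwnone : c.mark w = none)
      (hmarked : ∀ u ∈ Wset P c v, u ≠ w → c.mark u = some (s.mul (P u v)))
      (hex : ∃ u ∈ Wset P c v, u ≠ w) :
      Step P c ⟨c.black, Function.update c.mark w (some (s.inv.mul (P w v)))⟩
  /-- (4) if no white node is marked, an arbitrary white node may be marked `+`. -/
  | force4 (c : Config n) (u : Fin n)
      (hnomark : ∀ x : Fin n, x ∉ c.black → c.mark x = none)
      (hu : u ∉ c.black) :
      Step P c ⟨c.black, Function.update c.mark u (some SignPatEntry.pos)⟩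

/-- The initial configuration: black set `Z`, no marks. -/
def initConfig {n : ℕ} (Z : Finset (Fin n)) : Config n := ⟨Z, fun _ => none⟩

/-- `Z` is a signed zero forcing set of the pattern `P`. -/
def SignedZFS {n : ℕ} (P : Fin n → Fin n → SignPatEntry) (Z : Finset (Fin n)) : Prop :=
  ∃ c : Config n, Relation.ReflTransGen (Step P) (initConfig Z) c ∧ c.black = Finset.univ

/-- The negative looped pattern `P⁻`: off-diagonal as `P`; diagonal `-` if
`P i i ∈ {0,-}`, and `?` if `P i i ∈ {+,?}`. -/
def negLooped {n : ℕ} (P : Fin n → Fin n → SignPatEntry) :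
    Fin n → Fin n → SignPatEntry := fun i j =>
  if i = j then
    (match P i i with
      | SignPatEntry.zero => SignPatEntry.neg
      | SignPatEntry.neg => SignPatEntry.neg
      | _ => SignPatEntry.unk)
  else P i j

/-- The positive looped pattern `P⁺`: off-diagonal as `P`; diagonal `+` if
`P i i ∈ {0,+}`, and `?` if `P i i ∈ {-,?}`. -/
def posLooped {n : ℕ} (P : Fin n → Fin n → SignPatEntry) :
    Fin n → Fin n → SignPatEntry := fun i j =>
  if i = j then
    (match P i i with
      | SignPatEntry.zero => SignPatEntry.pos
      | SignPatEntry.pos => SignPatEntry.pos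
      | _ => SignPatEntry.unk)
  else P i j

/-- The sign of a real number, as a sign-pattern entry. -/
noncomputable def sgnR (x : ℝ) : SignPatEntry :=
  if 0 < x then SignPatEntry.pos else if x < 0 then SignPatEntry.neg else SignPatEntry.zero

/-- The left eigenspace `{ν | νᵀ A = λ νᵀ}` as a submodule of `ℝⁿ`. -/
def leftEigenspace {n : ℕ} (A : Matrix (Fin n) (Fin n) ℝ) (lam : ℝ) :
    Submodule ℝ (Fin n → ℝ) where
  carrier := {ν | Matrix.vecMul ν A = lam • ν}
  zero_mem' := by simp [Matrix.zero_vecMul]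
  add_mem' := by
    intro a b ha hb
    simp only [Set.mem_setOf_eq] at *
    rw [Matrix.add_vecMul, ha, hb, smul_add]
  smul_mem' := by
    intro c a ha
    simp only [Set.mem_setOf_eq] at *
    rw [Matrix.smul_vecMul, ha, smul_comm]

/-! ### Auxiliary machinery for the proof of `stmt8`. -/

/-- Real value of a sign entry. -/
noncomputable def sval : SignPatEntry → ℝ
  | SignPatEntry.pos => 1
  | SignPatEntry.neg => -1
  | SignPatEntry.zero => 0
  | SignPatEntry.unk => 0

lemma sval_cases (t : SignPatEntry) : sval t = 1 ∨ sval t = -1 ∨ sval t = 0 := by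
  cases t <;> simp [sval]

lemma sval_inv (a : SignPatEntry) : sval a.inv = -sval a := by
  cases a <;> simp [sval, SignPatEntry.inv]

lemma sval_mul (a b : SignPatEntry) : sval (a.mul b) = sval a * sval b := by
  cases a <;> cases b <;> simp [sval, SignPatEntry.mul, SignPatEntry.inv]

lemma posLooped_diag {n : ℕ} (P : Fin n → Fin n → SignPatEntry) (i : Fin n) :
    posLooped P i i = SignPatEntry.pos ∨ posLooped P i i = SignPatEntry.unk := by
  unfold posLooped
  simp only [if_pos rfl]
  cases h : P i i <;> simp [h]

lemma posLooped_diag_ne_zero {n : ℕ} (P : Fin n → Fin n → SignPatEntry) (i : Fin n) :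
    posLooped P i i ≠ SignPatEntry.zero := by
  rcases posLooped_diag P i with h | h <;> simp [h]

lemma posLooped_off {n : ℕ} (P : Fin n → Fin n → SignPatEntry) {i j : Fin n} (h : i ≠ j) :
    posLooped P i j = P i j := by
  simp [posLooped, h]

/-- The invariant maintained along the signing-and-coloring game. -/
def GameInv {n : ℕ} (ν : Fin n → ℝ) (c : Config n) : Prop :=
  (∀ u ∈ c.black, ν u = 0) ∧ ∃ s : ℝ, (s = 1 ∨ s = -1) ∧
    ∀ u t, c.mark u = some t → 0 ≤ s * sval t * ν u

/-- Off the white out-neighborhood of `v`, the terms of the `v`-th column equation vanish. -/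
lemma wsum {n : ℕ} (P : Fin n → Fin n → SignPatEntry) (B : Matrix (Fin n) (Fin n) ℝ)
    (hB : ∀ i j : Fin n, i ≠ j → matchesSign (P i j) (B i j))
    (ν : Fin n → ℝ) (hν : ∀ v, ∑ u, ν u * B u v = 0)
    (c : Config n) (hbl : ∀ u ∈ c.black, ν u = 0) (v : Fin n) :
    ∑ u ∈ Wset (posLooped P) c v, ν u * B u v = 0 := by
  rw [Finset.sum_subset (Finset.subset_univ _)]
  · exact hν v
  · intro x _ hx
    simp only [Wset, Finset.mem_filter, Finset.mem_univ, true_and, not_and, not_not] at hx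
    by_cases hb : x ∈ c.black
    · rw [hbl x hb, zero_mul]
    · have hz : posLooped P x v = SignPatEntry.zero := hx hb
      have hxv : x ≠ v := by
        intro h; subst h; exact posLooped_diag_ne_zero P x hz
      have hPz : P x v = SignPatEntry.zero := by rwa [posLooped_off P hxv] at hz
      have := hB x v hxv
      rw [hPz] at this
      simp only [matchesSign] at this
      rw [this, mul_zero]

/-- Sign of a `B`-entry indexed by a white out-neighbor of a legal pivot. -/
lemma wsign {n : ℕ} (P : Fin n → Fin n → SignPatEntry)
    (hP : ∀ i j : Fin n, i ≠ j → P i j ≠ SignPatEntry.unk)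
    (B : Matrix (Fin n) (Fin n) ℝ)
    (hB : ∀ i j : Fin n, i ≠ j → matchesSign (P i j) (B i j))
    (hBd : ∀ i, posLooped P i i = SignPatEntry.pos → 0 < B i i)
    {c : Config n} {v u : Fin n}
    (hv : v ∈ c.black ∨ posLooped P v v ≠ SignPatEntry.unk)
    (hu : u ∈ Wset (posLooped P) c v) :
    0 < sval (posLooped P u v) * B u v := by
  have hu' : u ∉ c.black ∧ posLooped P u v ≠ SignPatEntry.zero := by
    simpa [Wset] using hu
  by_cases h : u = v
  · subst h
    have hpos : posLooped P u u = SignPatEntry.pos := by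
      rcases posLooped_diag P u with h1 | h1
      · exact h1
      · rcases hv with hv | hv
        · exact absurd hv hu'.1
        · exact absurd h1 hv
    rw [hpos]
    simpa [sval] using hBd u hpos
  · rw [posLooped_off P h] at hu' ⊢
    have h1 := hB u v h
    have h2 := hP u v h
    cases hp : P u v with
    | pos => rw [hp] at h1; simp only [matchesSign] at h1; simpa [sval] using h1
    | neg =>
        rw [hp] at h1; simp only [matchesSign] at h1
        simp only [sval]; nlinarith
    | zero => exact absurd hp hu'.2
    | unk => exact absurd hp h2

/-- One step of the game preserves the invariant. -/
lemma step_inv {n : ℕ} (P : Fin n → Fin n → SignPatEntry)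
    (hP : ∀ i j : Fin n, i ≠ j → P i j ≠ SignPatEntry.unk)
    (B : Matrix (Fin n) (Fin n) ℝ)
    (hB : ∀ i j : Fin n, i ≠ j → matchesSign (P i j) (B i j))
    (hBd : ∀ i, posLooped P i i = SignPatEntry.pos → 0 < B i i)
    (ν : Fin n → ℝ) (hν : ∀ v, ∑ u, ν u * B u v = 0)
    {c c' : Config n} (hstep : Step (posLooped P) c c')
    (hinv : GameInv ν c) : GameInv ν c' := by
  obtain ⟨hbl, s0, hs0, hmk⟩ := hinv
  have hs0ne : s0 ≠ 0 := by rcases hs0 with h | h <;> simp [h]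
  cases hstep with
  | force1 v u hv hW =>
      have hsum := wsum P B hB ν hν c hbl v
      rw [hW, Finset.sum_singleton] at hsum
      have hsgn := wsign P hP B hB hBd hv (by rw [hW]; exact Finset.mem_singleton_self u)
      have hBne : B u v ≠ 0 := by
        intro h; rw [h, mul_zero] at hsgn; exact lt_irrefl 0 hsgn
      have hu0 : ν u = 0 := by
        rcases mul_eq_zero.1 hsum with h | h
        · exact h
        · exact absurd h hBne
      refine ⟨?_, s0, hs0, hmk⟩
      intro x hx
      rcases Finset.mem_insert.1 hx with h | h
      · subst h; exact hu0
      · exact hbl x h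
  | force2 v hv hall =>
      have hsum := wsum P B hB ν hν c hbl v
      obtain ⟨t, ht, hmarks⟩ : ∃ t : ℝ, (t = 1 ∨ t = -1) ∧
          ∀ u ∈ Wset (posLooped P) c v,
            0 ≤ s0 * t * (sval (posLooped P u v) * ν u) := by
        rcases hall with hall | hall
        · refine ⟨1, Or.inl rfl, fun u hu => ?_⟩
          have h := hmk u _ (hall u hu)
          nlinarith
        · refine ⟨-1, Or.inr rfl, fun u hu => ?_⟩
          have h := hmk u _ (hall u hu)
          rw [sval_inv] at h
          nlinarith
      have hterm : ∀ u ∈ Wset (posLooped P) c v, 0 ≤ (s0 * t) * (ν u * B u v) := by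
        intro u hu
        have h1 := hmarks u hu
        have h2 := wsign P hP B hB hBd hv hu
        rcases sval_cases (posLooped P u v) with hq | hq | hq
        · rw [hq] at h1 h2; nlinarith
        · rw [hq] at h1 h2; nlinarith
        · rw [hq] at h2; simp at h2
      have hzsum : ∑ u ∈ Wset (posLooped P) c v, (s0 * t) * (ν u * B u v) = 0 := by
        rw [← Finset.mul_sum, hsum, mul_zero]
      have hzero := (Finset.sum_eq_zero_iff_of_nonneg hterm).1 hzsum
      have htne : s0 * t ≠ 0 :=
        mul_ne_zero hs0ne (by rcases ht with h | h <;> simp [h])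
      have hWzero : ∀ u ∈ Wset (posLooped P) c v, ν u = 0 := by
        intro u hu
        have h0 := hzero u hu
        have h2 := wsign P hP B hB hBd hv hu
        have hBne : B u v ≠ 0 := by
          intro h; rw [h, mul_zero] at h2; exact lt_irrefl 0 h2
        rcases mul_eq_zero.1 h0 with h | h
        · exact absurd h htne
        · rcases mul_eq_zero.1 h with h | h
          · exact h
          · exact absurd h hBne
      refine ⟨?_, s0, hs0, hmk⟩
      intro x hx
      rcases Finset.mem_union.1 hx with h | h
      · exact hbl x h
      · exact hWzero x h
  | force3 v w s hv hs hw hwnone hmarked hex =>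
      refine ⟨hbl, s0, hs0, ?_⟩
      intro x t hx
      dsimp only at hx
      by_cases hxw : x = w
      · subst hxw
        rw [Function.update_self] at hx
        injection hx with hx
        subst hx
        -- the new mark at `w`
        have hsum := wsum P B hB ν hν c hbl v
        have hsplit : ν x * B x v +
            ∑ u ∈ (Wset (posLooped P) c v).erase x, ν u * B u v = 0 := by
          rw [← Finset.add_sum_erase _ (fun u => ν u * B u v) hw] at hsum
          exact hsum
        have hterm : ∀ u ∈ (Wset (posLooped P) c v).erase x,
            0 ≤ (s0 * sval s) * (ν u * B u v) := by
          intro u hu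
          have huW := Finset.mem_of_mem_erase hu
          have hne := Finset.ne_of_mem_erase hu
          have h := hmk u _ (hmarked u huW hne)
          rw [sval_mul] at h
          have h2 := wsign P hP B hB hBd hv huW
          rcases sval_cases (posLooped P u v) with hq | hq | hq
          · rw [hq] at h h2; nlinarith
          · rw [hq] at h h2; nlinarith
          · rw [hq] at h2; simp at h2
        have hrest : 0 ≤ (s0 * sval s) *
            ∑ u ∈ (Wset (posLooped P) c v).erase x, ν u * B u v := by
          rw [Finset.mul_sum]
          exact Finset.sum_nonneg hterm
        have hle : (s0 * sval s) * (ν x * B x v) ≤ 0 := by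
          have heq : ν x * B x v
              = -∑ u ∈ (Wset (posLooped P) c v).erase x, ν u * B u v := by linarith
          rw [heq, mul_neg]
          linarith
        have hσ : sval s = 1 ∨ sval s = -1 := by
          rcases hs with rfl | rfl <;> simp [sval]
        have hsgnw := wsign P hP B hB hBd hv hw
        have hq : sval (posLooped P x v) = 1 ∨ sval (posLooped P x v) = -1 := by
          rcases sval_cases (posLooped P x v) with h | h | h
          · exact Or.inl h
          · exact Or.inr h
          · rw [h] at hsgnw; simp at hsgnw
        rw [sval_mul, sval_inv]
        rcases hs0 with h0 | h0 <;> rcases hσ with hσ | hσ <;> rcases hq with hq | hq <;>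
          rw [h0, hσ] at hle <;> rw [hq] at hsgnw <;> rw [h0, hσ, hq] <;>
          nlinarith [hle, hsgnw]
      · rw [Function.update_of_ne hxw] at hx
        exact hmk x t hx
  | force4 u hnomark hu =>
      refine ⟨hbl, if 0 ≤ ν u then 1 else -1, by split <;> simp, ?_⟩
      intro x t hx
      dsimp only at hx
      by_cases hxu : x = u
      · subst hxu
        rw [Function.update_self] at hx
        injection hx with hx
        subst hx
        simp only [sval]
        split
        · next h => nlinarith
        · next h => push_neg at h; nlinarith
      · rw [Function.update_of_ne hxu] at hx
        by_cases hb : x ∈ c.black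
        · rw [hbl x hb, mul_zero]
        · rw [hnomark x hb] at hx
          exact absurd hx (by simp)

/-- If `Z` is a negative signed zero forcing set of `P_s` (a signed zero
forcing set of the positive looped pattern `P_s⁺`), then for every `A ∈ Q_s(P_s)` and every
real `λ < 0` the left eigenspace `{ν | νᵀ A = λ νᵀ}` has dimension at most `|Z|`; hence the
maximum geometric multiplicity of a negative eigenvalue over `Q_s(P_s)` is at most the
negative signed zero forcing number. -/
theorem stmt8 {n : ℕ} (P : Fin n → Fin n → SignPatEntry)
    (hP : ∀ i j : Fin n, i ≠ j → P i j ≠ SignPatEntry.unk)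
    (Z : Finset (Fin n)) (hZ : SignedZFS (posLooped P) Z) :
    ∀ A : Matrix (Fin n) (Fin n) ℝ, QClass P A →
      ∀ lam : ℝ, lam < 0 →
        Module.finrank ℝ (leftEigenspace A lam) ≤ Z.card := by
  intro A hA lam hlam
  classical
  set B : Matrix (Fin n) (Fin n) ℝ :=
    fun u v => A u v - if u = v then lam else 0 with hBdef
  have hB : ∀ i j : Fin n, i ≠ j → matchesSign (P i j) (B i j) := by
    intro i j hij
    have hBij : B i j = A i j := by simp [hBdef, hij]
    rw [hBij]; exact hA i j
  have hBd : ∀ i, posLooped P i i = SignPatEntry.pos → 0 < B i i := by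
    intro i hpos
    have hAii : 0 ≤ A i i := by
      have h := hA i i
      cases hpi : P i i with
      | pos => rw [hpi] at h; simp only [matchesSign] at h; linarith
      | zero => rw [hpi] at h; simp only [matchesSign] at h; linarith
      | neg => exfalso; unfold posLooped at hpos; simp [hpi] at hpos
      | unk => exfalso; unfold posLooped at hpos; simp [hpi] at hpos
    have : B i i = A i i - lam := by simp [hBdef]
    rw [this]; linarith
  -- key vanishing statement
  have key : ∀ ν : Fin n → ℝ, Matrix.vecMul ν A = lam • ν →
      (∀ z ∈ Z, ν z = 0) → ν = 0 := by
    intro ν hνe hzZ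
    have hν : ∀ v, ∑ u, ν u * B u v = 0 := by
      intro v
      have h1 : ∑ u, ν u * A u v = lam * ν v := by
        have h := congrFun hνe v
        simpa [Matrix.vecMul, dotProduct] using h
      have h2 : ∑ u, ν u * B u v
          = (∑ u, ν u * A u v) - ∑ u, ν u * (if u = v then lam else 0) := by
        rw [← Finset.sum_sub_distrib]
        apply Finset.sum_congr rfl
        intro u _
        simp only [hBdef]
        ring
      have h3 : ∑ u : Fin n, ν u * (if u = v then lam else 0) = ν v * lam := by
        simp [mul_ite]
      rw [h2, h1, h3]; ring
    obtain ⟨c, hrt, hall⟩ := hZ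
    have hchain : ∀ c' : Config n,
        Relation.ReflTransGen (Step (posLooped P)) (initConfig Z) c' → GameInv ν c' := by
      intro c' hrt'
      induction hrt' with
      | refl =>
          refine ⟨fun u hu => hzZ u hu, 1, Or.inl rfl, ?_⟩
          intro u t h
          simp [initConfig] at h
      | tail _ hstep ih =>
          exact step_inv P hP B hB hBd ν hν hstep ih
    have hInv : GameInv ν c := hchain c hrt
    funext u
    exact hInv.1 u (by rw [hall]; exact Finset.mem_univ u)
  -- package into an injective linear map
  let φ : (leftEigenspace A lam) →ₗ[ℝ] ({x // x ∈ Z} → ℝ) :=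
    (LinearMap.funLeft ℝ ℝ (fun z : {x // x ∈ Z} => (z : Fin n))).comp
      (leftEigenspace A lam).subtype
  have hinj : Function.Injective φ := by
    rw [← LinearMap.ker_eq_bot, LinearMap.ker_eq_bot']
    rintro ⟨ν, hν⟩ h
    have hz : ∀ z ∈ Z, ν z = 0 := by
      intro z hzz
      exact congrFun h ⟨z, hzz⟩
    have hν' : Matrix.vecMul ν A = lam • ν := hν
    have := key ν hν' hz
    exact Subtype.ext this
  have hle := LinearMap.finrank_le_finrank_of_injective hinj
  have hcard : Module.finrank ℝ ({x // x ∈ Z} → ℝ) = Z.card := by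
    rw [Module.finrank_pi]
    simp
  rw [hcard] at hle
  exact hle
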